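/- If a linear map 𝒜 : ℝ^{m×n} → ℝ^p satisfies ‖𝒜X‖₂² ≤ (1+δ)‖X‖_F² for all X ∈ ℝ^{m×n} with rank(X) ≤ r, then for every X ∈ ℝ^{m×n} (of arbitrary rank): ‖𝒜X‖₂ ≤ √(1+δ) (‖X‖_F + ‖X‖_*/√r), where ‖X‖_* is the sum of the singular values of X. -/

import Mathlib

open scoped BigOperators
open Matrix

noncomputable section

/-- Frobenius (trace) inner product of real matrices. -/
def frobInner {m n : ℕ} (X Y : Matrix (Fin m) (Fin n) ℝ) : ℝ :=
  ∑ i, ∑ j, X i j * Y i j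

/-- Frobenius norm of a real matrix. -/
def frobNorm {m n : ℕ} (X : Matrix (Fin m) (Fin n) ℝ) : ℝ :=
  Real.sqrt (frobInner X X)

/-- Euclidean norm of a vector in ℝ^p. -/
def vecNorm {p : ℕ} (b : Fin p → ℝ) : ℝ :=
  Real.sqrt (∑ i, b i ^ 2)

/-- Nuclear norm: the sum of the singular values of X (square roots of the
eigenvalues of X Xᵀ). -/
def nuclearNorm {m n : ℕ} (X : Matrix (Fin m) (Fin n) ℝ) : ℝ :=
  ∑ i, Real.sqrt ((Matrix.isHermitian_mul_conjTranspose_self X).eigenvalues i)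

lemma frobInner_sum_left {m n : ℕ} {ι : Type*} (s : Finset ι)
    (M : ι → Matrix (Fin m) (Fin n) ℝ) (Y : Matrix (Fin m) (Fin n) ℝ) :
    frobInner (∑ i ∈ s, M i) Y = ∑ i ∈ s, frobInner (M i) Y := by
  unfold frobInner
  simp only [Matrix.sum_apply, Finset.sum_mul]
  calc (∑ a, ∑ b, ∑ i ∈ s, M i a b * Y a b)
      = ∑ a, ∑ i ∈ s, ∑ b, M i a b * Y a b :=
        Finset.sum_congr rfl fun a _ => Finset.sum_comm
    _ = ∑ i ∈ s, ∑ a, ∑ b, M i a b * Y a b := Finset.sum_comm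

lemma frobInner_comm {m n : ℕ} (X Y : Matrix (Fin m) (Fin n) ℝ) :
    frobInner X Y = frobInner Y X := by
  unfold frobInner; congr 1; ext a; congr 1; ext b; ring

lemma frobInner_sum_sum {m n : ℕ} {ι : Type*} (s : Finset ι)
    (M N : ι → Matrix (Fin m) (Fin n) ℝ) :
    frobInner (∑ i ∈ s, M i) (∑ j ∈ s, N j)
      = ∑ i ∈ s, ∑ j ∈ s, frobInner (M i) (N j) := by
  rw [frobInner_sum_left]
  refine Finset.sum_congr rfl fun i _ => ?_
  rw [frobInner_comm, frobInner_sum_left]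
  exact Finset.sum_congr rfl fun j _ => frobInner_comm _ _

lemma decomp {m n : ℕ} (X : Matrix (Fin m) (Fin n) ℝ) :
    ∃ R : Fin m → Matrix (Fin m) (Fin n) ℝ,
      X = ∑ i, R i ∧
      (∀ s : Finset (Fin m), (∑ i ∈ s, R i).rank ≤ s.card) ∧
      (∀ i j, frobInner (R i) (R j) =
        if i = j then (Matrix.isHermitian_mul_conjTranspose_self X).eigenvalues i else 0) := by
  classical
  set H := Matrix.isHermitian_mul_conjTranspose_self X with hH
  set U : Matrix (Fin m) (Fin m) ℝ :=
    (Matrix.IsHermitian.eigenvectorUnitary H : Matrix (Fin m) (Fin m) ℝ) with hUdef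
  have hU2 : U * Uᴴ = 1 := by
    exact Matrix.mem_unitaryGroup_iff.mp (Matrix.IsHermitian.eigenvectorUnitary H).2
  have hU1 : Uᴴ * U = 1 := by
    exact Matrix.mem_unitaryGroup_iff'.mp (Matrix.IsHermitian.eigenvectorUnitary H).2
  have hdiag : Uᴴ * (X * Xᴴ) * U = Matrix.diagonal H.eigenvalues := by
    have := Matrix.IsHermitian.conjStarAlgAut_star_eigenvectorUnitary H
    simp [Matrix.star_eq_conjTranspose] at this
    exact this
  have hUU' : ∀ i j : Fin m, (∑ a, U a i * U a j) = if i = j then 1 else 0 := by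
    intro i j
    have := congrFun (congrFun hU1 i) j
    simpa [Matrix.mul_apply, Matrix.conjTranspose_apply, Matrix.one_apply] using this
  set V : Matrix (Fin m) (Fin n) ℝ := Uᴴ * X with hV
  have hVV : V * Vᴴ = Matrix.diagonal H.eigenvalues := by
    rw [hV, Matrix.conjTranspose_mul, Matrix.conjTranspose_conjTranspose, ← hdiag]
    simp [Matrix.mul_assoc]
  have hVVe : ∀ i j : Fin m, (∑ b, V i b * V j b) = if i = j then H.eigenvalues i else 0 := by
    intro i j
    have := congrFun (congrFun hVV i) j
    simpa [Matrix.mul_apply, Matrix.conjTranspose_apply, Matrix.diagonal_apply] using this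
  set R : Fin m → Matrix (Fin m) (Fin n) ℝ :=
    fun i => Matrix.vecMulVec (fun a => U a i) (V i) with hR
  have hsum : X = ∑ i, R i := by
    have hX : U * V = X := by rw [hV, ← Matrix.mul_assoc, hU2, Matrix.one_mul]
    ext a b
    have := congrFun (congrFun hX a) b
    rw [← this]
    simp [Matrix.mul_apply, Matrix.sum_apply, hR, Matrix.vecMulVec_apply]
  have hinner : ∀ i j, frobInner (R i) (R j) =
      if i = j then H.eigenvalues i else 0 := by
    intro i j
    have : frobInner (R i) (R j)
        = (∑ a, U a i * U a j) * (∑ b, V i b * V j b) := by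
      rw [frobInner, Finset.sum_mul_sum]
      refine Finset.sum_congr rfl fun a _ => Finset.sum_congr rfl fun b _ => ?_
      simp [hR, Matrix.vecMulVec_apply]; ring
    rw [this, hUU' i j, hVVe i j]
    by_cases h : i = j <;> simp [h]
  refine ⟨R, hsum, ?_, hinner⟩
  intro s
  have hfact : (∑ i ∈ s, R i)
      = (Matrix.of fun a (i : s) => U a i) * (Matrix.of fun (i : s) b => V i b) := by
    ext a b
    rw [Matrix.sum_apply, Matrix.mul_apply, ← Finset.sum_coe_sort s]
    exact Finset.sum_congr rfl fun i _ => by simp [hR, Matrix.vecMulVec_apply]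
  rw [hfact]
  refine (Matrix.rank_mul_le_left _ _).trans ?_
  simpa [Fintype.card_coe] using Matrix.rank_le_card_width (Matrix.of fun a (i : s) => U a i)

set_option maxHeartbeats 2000000 in
theorem vecNorm_image_le {m n p r : ℕ}
    (A : Matrix (Fin m) (Fin n) ℝ →ₗ[ℝ] (Fin p → ℝ))
    (δ : ℝ) (hδ : 0 ≤ δ) (hr : 1 ≤ r)
    (hRIP : ∀ X : Matrix (Fin m) (Fin n) ℝ, X.rank ≤ r →
      vecNorm (A X) ^ 2 ≤ (1 + δ) * frobNorm X ^ 2) :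
    ∀ X : Matrix (Fin m) (Fin n) ℝ,
      vecNorm (A X) ≤ Real.sqrt (1 + δ) * (frobNorm X + nuclearNorm X / Real.sqrt r) := by
  classical
  intro X
  obtain ⟨R, hsum, hrank, hinner⟩ := decomp X
  set lam := (Matrix.isHermitian_mul_conjTranspose_self X).eigenvalues with hlam
  have hlam0 : ∀ i, 0 ≤ lam i :=
    fun i => Matrix.eigenvalues_self_mul_conjTranspose_nonneg X i
  set σ : Fin m → ℝ := fun i => Real.sqrt (lam i) with hσdef
  have hσ0 : ∀ i, 0 ≤ σ i := fun i => Real.sqrt_nonneg _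
  set π : Equiv.Perm (Fin m) := Tuple.sort (fun i => -σ i) with hπ
  have hanti : ∀ i j : Fin m, i ≤ j → σ (π j) ≤ σ (π i) := by
    intro i j hij
    have := Tuple.monotone_sort (fun i => -σ i) hij
    simpa [hπ] using this
  set τ : Fin m → ℝ := fun i => σ (π i) with hτdef
  set μ : Fin m → ℝ := fun i => lam (π i) with hμdef
  have hμτ : ∀ i, μ i = τ i ^ 2 := fun i => (Real.sq_sqrt (hlam0 _)).symm
  have hμ0 : ∀ i, 0 ≤ μ i := fun i => hlam0 _
  have hrpos : (0:ℝ) < r := by exact_mod_cast Nat.lt_of_lt_of_le Nat.zero_lt_one hr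
  set T : ℕ → Finset (Fin m) :=
    fun k => Finset.univ.filter (fun i : Fin m => (i : ℕ) / r = k) with hT
  set Y : ℕ → Matrix (Fin m) (Fin n) ℝ := fun k => ∑ i ∈ T k, R (π i) with hY
  -- generic partition lemma
  have hmaps : ∀ i : Fin m, (i : ℕ) / r ∈ Finset.range m :=
    fun i => Finset.mem_range.mpr (lt_of_le_of_lt (Nat.div_le_self _ _) i.isLt)
  have hXY : X = ∑ k ∈ Finset.range m, Y k := by
    rw [hsum, ← Equiv.sum_comp π R]
    exact (Finset.sum_fiberwise_of_maps_to (fun i _ => hmaps i) (fun i => R (π i))).symm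
  -- vecNorm is subadditive over sums
  set L : (Fin p → ℝ) →ₗ[ℝ] EuclideanSpace ℝ (Fin p) :=
    (WithLp.linearEquiv 2 ℝ (Fin p → ℝ)).symm.toLinearMap with hL
  have hvec : ∀ b : Fin p → ℝ, vecNorm b = ‖L b‖ := by
    intro b
    rw [vecNorm, EuclideanSpace.norm_eq]
    congr 1
    refine Finset.sum_congr rfl fun i _ => ?_
    simp [hL, Real.norm_eq_abs, sq_abs, WithLp.linearEquiv]
  have htri : vecNorm (A X) ≤ ∑ k ∈ Finset.range m, vecNorm (A (Y k)) := by
    rw [hXY, map_sum, hvec]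
    rw [map_sum]
    refine (norm_sum_le _ _).trans_eq ?_
    exact Finset.sum_congr rfl fun k _ => (hvec _).symm
  -- Frobenius data of blocks
  have hfrob : ∀ k, frobInner (Y k) (Y k) = ∑ i ∈ T k, μ i := by
    intro k
    rw [hY]
    simp only []
    rw [frobInner_sum_sum]
    have : ∀ i ∈ T k, ∀ j ∈ T k, frobInner (R (π i)) (R (π j))
        = if i = j then μ i else 0 := by
      intro i _ j _
      rw [hinner]
      by_cases h : i = j
      · simp [h, hμdef]
      · have : ¬ (π i = π j) := fun hc => h (π.injective hc)
        simp [h, this]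
    calc (∑ i ∈ T k, ∑ j ∈ T k, frobInner (R (π i)) (R (π j)))
        = ∑ i ∈ T k, ∑ j ∈ T k, if i = j then μ i else 0 :=
          Finset.sum_congr rfl fun i hi => Finset.sum_congr rfl fun j hj => this i hi j hj
      _ = ∑ i ∈ T k, μ i := by
          refine Finset.sum_congr rfl fun i hi => ?_
          simp [Finset.sum_ite_eq, hi]
  have hfrobN : ∀ k, frobNorm (Y k) = Real.sqrt (∑ i ∈ T k, μ i) := by
    intro k; rw [frobNorm, hfrob]
  -- rank of blocks
  have hcard : ∀ k, (T k).card ≤ r := by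
    intro k
    have hc : (T k).card ≤ (Finset.range r).card := by
      refine Finset.card_le_card_of_injOn (fun i => (i : ℕ) % r)
        (fun i _ => Finset.mem_range.mpr (Nat.mod_lt _ (by omega))) ?_
      intro i hi j hj hmod
      simp only [hT, Finset.mem_coe, Finset.mem_filter, Finset.mem_univ, true_and] at hi hj
      have h3 : (i : ℕ) % r = (j : ℕ) % r := by simpa using hmod
      have h1 := Nat.div_add_mod (i : ℕ) r
      have h2 := Nat.div_add_mod (j : ℕ) r
      rw [hi] at h1
      rw [hj] at h2
      exact Fin.ext (by omega)
    simpa using hc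
  have hrankY : ∀ k, (Y k).rank ≤ r := by
    intro k
    have himg : Y k = ∑ j ∈ (T k).image π, R j := by
      rw [hY]
      exact (Finset.sum_image (fun x _ y _ h => π.injective h)).symm
    rw [himg]
    refine (hrank _).trans ?_
    rw [Finset.card_image_of_injective _ π.injective]
    exact hcard k
  -- full previous block
  have hfull : ∀ k, 1 ≤ k → (T k).Nonempty → (T (k - 1)).card = r := by
    intro k hk ⟨i, hi⟩
    simp only [hT, Finset.mem_filter] at hi
    have hik : (i : ℕ) / r = k := hi.2
    have hige : k * r ≤ (i : ℕ) := by
      have := Nat.div_add_mod (i : ℕ) r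
      rw [hik] at this
      have hcomm : k * r = r * k := Nat.mul_comm k r
      omega
    have himlt : (i : ℕ) < m := i.isLt
    have hbound : ∀ j' : ℕ, j' < r → (k - 1) * r + j' < m := by
      intro j' hj'
      have : (k - 1) * r + j' < k * r := by
        have : (k - 1) * r + r = k * r := by
          have : k - 1 + 1 = k := by omega
          calc (k-1)*r + r = (k-1+1)*r := by ring
            _ = k * r := by rw [this]
        omega
      omega
    have hmpos : 0 < m := by
      have := hbound 0 (by omega); omega
    set g : ℕ → Fin m := fun j' =>
      if h : (k - 1) * r + j' < m then (⟨(k - 1) * r + j', h⟩ : Fin m) else ⟨0, hmpos⟩ with hg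
    have hge : r ≤ (T (k - 1)).card := by
      have : (Finset.range r).card ≤ (T (k-1)).card := by
        refine Finset.card_le_card_of_injOn g ?_ ?_
        · intro j' hj'
          have hj' := Finset.mem_range.mp hj'
          have hlt := hbound j' hj'
          simp only [hg, dif_pos hlt, hT, Finset.mem_filter, Finset.mem_univ, true_and]
          have heq : ((k-1) * r + j') / r = k - 1 := by
            rw [mul_comm, Nat.mul_add_div (by omega : 0 < r), Nat.div_eq_of_lt hj', Nat.add_zero]
          exact Finset.mem_coe.mpr (Finset.mem_filter.mpr ⟨Finset.mem_univ _, heq⟩)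
        · intro a ha b hb hab
          have ha' := Finset.mem_range.mp ha
          have hb' := Finset.mem_range.mp hb
          have h1 := hbound a ha'
          have h2 := hbound b hb'
          simp only [hg, dif_pos h1, dif_pos h2] at hab
          have := congrArg Fin.val hab
          simp at this; omega
      simpa using this
    exact le_antisymm (hcard _) hge
  -- inner product of X with itself
  have hlamXX : frobInner X X = ∑ i, lam i := by
    conv_lhs => rw [hsum]
    rw [frobInner_sum_sum]
    simp [hinner]
  have hY0 : frobNorm (Y 0) ≤ frobNorm X := by
    rw [hfrobN 0, frobNorm, hlamXX]
    apply Real.sqrt_le_sqrt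
    have h1 : ∑ i ∈ T 0, μ i ≤ ∑ i, μ i :=
      Finset.sum_le_sum_of_subset_of_nonneg (Finset.subset_univ _) (fun i _ _ => hμ0 i)
    have h2 : ∑ i, μ i = ∑ i, lam i := Equiv.sum_comp π lam
    linarith
  have hstep : ∀ k, 1 ≤ k → ∀ i ∈ T k, (r:ℝ) * τ i ≤ ∑ j ∈ T (k-1), τ j := by
    intro k hk i hi
    have hcardfull : (T (k-1)).card = r := hfull k hk ⟨i, hi⟩
    have hmem : ∀ j ∈ T (k-1), τ i ≤ τ j := by
      intro j hj
      have hi' : (i:ℕ)/r = k := by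
        simpa [hT] using hi
      have hj' : (j:ℕ)/r = k-1 := by
        simpa [hT] using hj
      have h1 := Nat.div_add_mod (j:ℕ) r
      rw [hj'] at h1
      have h2 := Nat.div_add_mod (i:ℕ) r
      rw [hi'] at h2
      have hmr : (j:ℕ) % r < r := Nat.mod_lt _ (by omega)
      have hXk : r * (k-1) + r = r * k := by
        have hkk : k - 1 + 1 = k := by omega
        calc r*(k-1) + r = r*((k-1)+1) := by ring
          _ = r*k := by rw [hkk]
      have hji : j ≤ i := Fin.le_def.mpr (by omega)
      exact hanti j i hji
    calc (r:ℝ) * τ i = ∑ _j ∈ T (k-1), τ i := by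
          rw [Finset.sum_const, hcardfull, nsmul_eq_mul]
      _ ≤ ∑ j ∈ T (k-1), τ j := Finset.sum_le_sum hmem
  have hblockN : ∀ k, 1 ≤ k →
      frobNorm (Y k) ≤ (∑ j ∈ T (k-1), τ j) / Real.sqrt r := by
    intro k hk
    set S := ∑ j ∈ T (k-1), τ j with hS
    have hS0 : 0 ≤ S := Finset.sum_nonneg (fun j _ => hσ0 _)
    have hsq : ∑ i ∈ T k, μ i ≤ S^2 / r := by
      by_cases hne : (T k).Nonempty
      · have h1 : ∀ i ∈ T k, τ i ≤ S / r := by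
          intro i hi
          have h := hstep k hk i hi
          rw [le_div_iff₀ hrpos]
          linarith
        have h2 : ∀ i ∈ T k, μ i ≤ (S/r)^2 := by
          intro i hi
          rw [hμτ i]
          have ht0 : 0 ≤ τ i := hσ0 _
          have := h1 i hi
          nlinarith
        calc ∑ i ∈ T k, μ i ≤ ∑ _i ∈ T k, (S/r)^2 := Finset.sum_le_sum h2
          _ = (T k).card * (S/r)^2 := by rw [Finset.sum_const, nsmul_eq_mul]
          _ ≤ r * (S/r)^2 := by
              apply mul_le_mul_of_nonneg_right _ (sq_nonneg _)
              exact_mod_cast hcard k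
          _ = S^2/r := by field_simp
      · rw [Finset.not_nonempty_iff_eq_empty.mp hne]
        simp
        positivity
    rw [hfrobN k]
    calc Real.sqrt (∑ i ∈ T k, μ i) ≤ Real.sqrt (S^2/r) := Real.sqrt_le_sqrt hsq
      _ = S / Real.sqrt r := by
          rw [Real.sqrt_div (sq_nonneg S), Real.sqrt_sq hS0]
  have hRIPk : ∀ k, vecNorm (A (Y k)) ≤ Real.sqrt (1+δ) * frobNorm (Y k) := by
    intro k
    have h2 := hRIP (Y k) (hrankY k)
    have h0 : 0 ≤ vecNorm (A (Y k)) := Real.sqrt_nonneg _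
    have hf0 : 0 ≤ frobNorm (Y k) := Real.sqrt_nonneg _
    have h1δ : (0:ℝ) ≤ 1 + δ := by linarith
    calc vecNorm (A (Y k)) = Real.sqrt ((vecNorm (A (Y k)))^2) := (Real.sqrt_sq h0).symm
      _ ≤ Real.sqrt ((1+δ) * frobNorm (Y k)^2) := Real.sqrt_le_sqrt h2
      _ = Real.sqrt (1+δ) * frobNorm (Y k) := by
          rw [Real.sqrt_mul h1δ, Real.sqrt_sq hf0]
  -- nuclear norm identities
  have hnuc : nuclearNorm X = ∑ i, τ i := by
    have h1 : nuclearNorm X = ∑ i, σ i := by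
      simp only [nuclearNorm, ← hlam, hσdef]
    rw [h1, hτdef]
    exact (Equiv.sum_comp π σ).symm
  have hnuc0 : 0 ≤ nuclearNorm X := by
    rw [hnuc]; exact Finset.sum_nonneg fun i _ => hσ0 _
  have hfX0 : 0 ≤ frobNorm X := Real.sqrt_nonneg _
  have hsr0 : 0 < Real.sqrt r := Real.sqrt_pos.mpr hrpos
  have hsum2 : ∑ k ∈ Finset.range m, frobNorm (Y k)
      ≤ frobNorm X + nuclearNorm X / Real.sqrt r := by
    rcases Nat.eq_zero_or_pos m with hm | hm
    · have hre : Finset.range m = ∅ := by rw [hm]; rfl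
      rw [hre, Finset.sum_empty]
      exact add_nonneg hfX0 (div_nonneg hnuc0 hsr0.le)
    · rw [← Finset.add_sum_erase _ _ (Finset.mem_range.mpr hm)]
      have herase : (Finset.range m).erase 0 = Finset.Ico 1 m := by
        rw [Finset.range_eq_Ico, ← Nat.Ico_succ_left_eq_erase_Ico]
      refine add_le_add hY0 ?_
      have hτsum : ∑ k ∈ Finset.range m, ∑ j ∈ T k, τ j = ∑ i, τ i :=
        Finset.sum_fiberwise_of_maps_to (fun i _ => hmaps i) τ
      calc ∑ k ∈ (Finset.range m).erase 0, frobNorm (Y k)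
          ≤ ∑ k ∈ (Finset.range m).erase 0, (∑ j ∈ T (k-1), τ j) / Real.sqrt r := by
            refine Finset.sum_le_sum fun k hk => ?_
            have := (Finset.mem_erase.mp hk).1
            exact hblockN k (by omega)
        _ = (∑ k ∈ (Finset.range m).erase 0, ∑ j ∈ T (k-1), τ j) / Real.sqrt r := by
            rw [Finset.sum_div]
        _ ≤ nuclearNorm X / Real.sqrt r := by
            gcongr
            rw [herase, Finset.sum_Ico_eq_sum_range]
            rw [hnuc, ← hτsum]
            have hss : ∀ i ∈ Finset.range (m-1), (∑ j ∈ T (1 + i - 1), τ j) = ∑ j ∈ T i, τ j := by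
              intro i _
              have h15 : 1 + i - 1 = i := by omega
              rw [h15]
            rw [Finset.sum_congr rfl hss]
            refine Finset.sum_le_sum_of_subset_of_nonneg
              (Finset.range_subset_range.mpr (by omega)) (fun k _ _ => Finset.sum_nonneg fun j _ => hσ0 _)
  calc vecNorm (A X) ≤ ∑ k ∈ Finset.range m, vecNorm (A (Y k)) := htri
    _ ≤ ∑ k ∈ Finset.range m, Real.sqrt (1+δ) * frobNorm (Y k) :=
        Finset.sum_le_sum (fun k _ => hRIPk k)
    _ = Real.sqrt (1+δ) * ∑ k ∈ Finset.range m, frobNorm (Y k) := by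
        rw [Finset.mul_sum]
    _ ≤ Real.sqrt (1+δ) * (frobNorm X + nuclearNorm X / Real.sqrt r) :=
        mul_le_mul_of_nonneg_left hsum2 (Real.sqrt_nonneg _)
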